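/- Fix n ∈ ℕ, p ≥ 1, a block decomposition k of {1, …, n}, a radius r > 0, and t ∈ ℕ. For all radii 0 < R_2 ≤ R_1, the probability that t independent uniformly random points of a superball are pairwise 2r-separated is monotone in the radius: (1/vol(B^n_{p,k}(R_1))^t) ∫_{B^n_{p,k}(R_1)^t} 1[‖x_i − x_j‖_{p,k,n} ≥ 2r for all i ≠ j] dx_1 ⋯ dx_t ≥ (1/vol(B^n_{p,k}(R_2))^t) ∫_{B^n_{p,k}(R_2)^t} 1[‖x_i − x_j‖_{p,k,n} ≥ 2r for all i ≠ j] dx_1 ⋯ dx_t. -/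

import Mathlib

open MeasureTheory Filter
open scoped BigOperators ENNReal Pointwise

/-- The superball norm on `ℝ^n` associated to exponent `p` and a block decomposition
given by `m` blocks with endpoints `k 0 = 0 < k 1 < ⋯ < k m = n`:
`‖x‖ = (∑_{j<m} ‖(x_{k j}, …, x_{k (j+1) - 1})‖₂^p)^(1/p)`. -/
noncomputable def superNorm (p : ℝ) {n : ℕ} (m : ℕ) (k : ℕ → ℕ) (x : Fin n → ℝ) : ℝ :=
  (∑ j ∈ Finset.range m,
      (Real.sqrt (∑ i : Fin n, if k j ≤ (i : ℕ) ∧ (i : ℕ) < k (j + 1) then x i ^ 2 else 0)) ^ p)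
    ^ (1 / p)

/-- `k` is a block decomposition of `{1, …, n}` into `m` blocks. -/
def IsBlockDecomp (n m : ℕ) (k : ℕ → ℕ) : Prop :=
  0 < m ∧ k 0 = 0 ∧ k m = n ∧ ∀ j < m, k j < k (j + 1)

/-- The superball with center `c` and radius `r`. -/
noncomputable def superBall (p : ℝ) {n : ℕ} (m : ℕ) (k : ℕ → ℕ) (c : Fin n → ℝ) (r : ℝ) :
    Set (Fin n → ℝ) :=
  {y | superNorm p m k (y - c) ≤ r}

/-- `P` is the set of centers of a translative packing of superballs of radius `r`. -/
def IsSuperballPacking (p : ℝ) {n : ℕ} (m : ℕ) (k : ℕ → ℕ) (r : ℝ)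
    (P : Set (Fin n → ℝ)) : Prop :=
  ∀ x ∈ P, ∀ y ∈ P, x ≠ y → 2 * r ≤ superNorm p m k (x - y)

/-- The translative packing density of superballs of radius `r` in `ℝ^n`. -/
noncomputable def packingDensity (p : ℝ) (n m : ℕ) (k : ℕ → ℕ) (r : ℝ) : ℝ :=
  limsup (fun R : ℝ =>
      ⨆ P : {P : Set (Fin n → ℝ) // IsSuperballPacking p m k r P},
        (volume ((⋃ x ∈ P.1, superBall p m k x r) ∩ superBall p m k 0 R)).toReal /
          (volume (superBall p m k (0 : Fin n → ℝ) R)).toReal) atTop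

/-- The canonical hard superball model partition function `Ẑ_S(t)`. -/
noncomputable def Zhat (p : ℝ) {n : ℕ} (m : ℕ) (k : ℕ → ℕ) (r : ℝ) (S : Set (Fin n → ℝ))
    (t : ℕ) : ℝ :=
  ((t.factorial : ℝ))⁻¹ *
    ∫ x : Fin t → Fin n → ℝ in Set.univ.pi fun _ => S,
      Set.indicator
        {y : Fin t → Fin n → ℝ | ∀ i j : Fin t, i ≠ j → 2 * r ≤ superNorm p m k (y i - y j)}
        (fun _ => (1 : ℝ)) x

/-- The grand canonical hard superball model partition function `Z_S(λ)`. -/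
noncomputable def Zgc (p : ℝ) {n : ℕ} (m : ℕ) (k : ℕ → ℕ) (r : ℝ) (S : Set (Fin n → ℝ))
    (lam : ℝ) : ℝ :=
  ∑' t : ℕ, lam ^ t * Zhat p m k r S t

/-- The expected packing density `α_S(λ)` of the hard superball model. -/
noncomputable def alphaDen (p : ℝ) {n : ℕ} (m : ℕ) (k : ℕ → ℕ) (r : ℝ) (S : Set (Fin n → ℝ))
    (lam : ℝ) : ℝ :=
  lam * deriv (Zgc p m k r S) lam / ((volume S).toReal * Zgc p m k r S lam)


section AuxLemmas

variable {p : ℝ} {n m : ℕ} {k : ℕ → ℕ}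

lemma continuous_superNorm (hp : 1 ≤ p) : Continuous (superNorm p (n := n) m k) := by
  have hp0 : (0:ℝ) ≤ p := le_trans zero_le_one hp
  unfold superNorm
  refine Continuous.rpow_const ?_ (fun x => Or.inr (by positivity))
  refine continuous_finset_sum _ fun j _ => ?_
  refine Continuous.rpow_const ?_ (fun x => Or.inr hp0)
  refine Continuous.sqrt (continuous_finset_sum _ fun i _ => ?_)
  split_ifs with h
  · exact (continuous_apply i).pow 2
  · exact continuous_const

lemma superNorm_smul (hp : 1 ≤ p) {c : ℝ} (hc : 0 ≤ c) (x : Fin n → ℝ) :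
    superNorm p m k (c • x) = c * superNorm p m k x := by
  have hp0 : (0:ℝ) < p := lt_of_lt_of_le one_pos hp
  unfold superNorm
  have h1 : ∀ j, (∑ i : Fin n, if k j ≤ (i:ℕ) ∧ (i:ℕ) < k (j+1) then (c • x) i ^ 2 else 0)
      = c ^ 2 * ∑ i : Fin n, if k j ≤ (i:ℕ) ∧ (i:ℕ) < k (j+1) then x i ^ 2 else 0 := by
    intro j
    rw [Finset.mul_sum]
    refine Finset.sum_congr rfl fun i _ => ?_
    split_ifs with h
    · simp [mul_pow]
    · simp
  have key : ∀ j ∈ Finset.range m,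
      (Real.sqrt (∑ i : Fin n, if k j ≤ (i:ℕ) ∧ (i:ℕ) < k (j+1) then (c • x) i ^ 2 else 0)) ^ p
      = c ^ p * (Real.sqrt (∑ i : Fin n, if k j ≤ (i:ℕ) ∧ (i:ℕ) < k (j+1) then x i ^ 2 else 0)) ^ p := by
    intro j _
    rw [h1 j, Real.sqrt_mul (sq_nonneg c), Real.sqrt_sq hc,
      Real.mul_rpow hc (Real.sqrt_nonneg _)]
  rw [Finset.sum_congr rfl key, ← Finset.mul_sum,
    Real.mul_rpow (Real.rpow_nonneg hc p)
      (Finset.sum_nonneg fun j _ => Real.rpow_nonneg (Real.sqrt_nonneg _) p),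
    ← Real.rpow_mul hc, mul_one_div, div_self hp0.ne', Real.rpow_one]

lemma abs_le_superNorm (hp : 1 ≤ p) (hk : IsBlockDecomp n m k) (x : Fin n → ℝ) (i : Fin n) :
    |x i| ≤ superNorm p m k x := by
  classical
  obtain ⟨hm, hk0, hkm, hmono⟩ := hk
  have hp0 : (0:ℝ) < p := lt_of_lt_of_le one_pos hp
  unfold superNorm
  set s : ℕ → ℝ := fun j' => Real.sqrt
    (∑ i' : Fin n, if k j' ≤ (i':ℕ) ∧ (i':ℕ) < k (j'+1) then x i' ^ 2 else 0) with hs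
  set j := Nat.findGreatest (fun j => k j ≤ (i:ℕ)) m with hj
  have h0 : k 0 ≤ (i:ℕ) := by simp [hk0]
  have hspec : k j ≤ (i:ℕ) := Nat.findGreatest_spec (P := fun j => k j ≤ (i:ℕ)) (m := 0) (Nat.zero_le m) h0
  have hjle : j ≤ m := Nat.findGreatest_le m
  have hjm : j < m := by
    rcases lt_or_eq_of_le hjle with h | h
    · exact h
    · exfalso; rw [h, hkm] at hspec; omega
  have hilt : (i:ℕ) < k (j+1) := by
    by_contra hcon
    push_neg at hcon
    have : j + 1 ≤ j := Nat.le_findGreatest (by omega) hcon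
    omega
  have h1 : |x i| ≤ s j := by
    rw [hs, ← Real.sqrt_sq_eq_abs]
    apply Real.sqrt_le_sqrt
    have := Finset.single_le_sum
      (f := fun i' : Fin n => if k j ≤ (i':ℕ) ∧ (i':ℕ) < k (j+1) then x i' ^ 2 else 0)
      (fun i' _ => by split_ifs <;> positivity) (Finset.mem_univ i)
    simpa [hspec, hilt] using this
  have h2 : s j ≤ (∑ j' ∈ Finset.range m, (s j') ^ p) ^ (1/p) := by
    have hterm : (s j) ^ p ≤ ∑ j' ∈ Finset.range m, (s j') ^ p :=
      Finset.single_le_sum (f := fun j' => s j' ^ p) (fun j' _ => Real.rpow_nonneg (Real.sqrt_nonneg _) p)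
        (Finset.mem_range.2 hjm)
    calc s j = ((s j) ^ p) ^ (1/p) := by
          rw [← Real.rpow_mul (Real.sqrt_nonneg _), mul_one_div, div_self hp0.ne', Real.rpow_one]
      _ ≤ _ := Real.rpow_le_rpow (Real.rpow_nonneg (Real.sqrt_nonneg _) p) hterm (by positivity)
  exact h1.trans h2

lemma volume_superBall_lt_top (hp : 1 ≤ p) (hk : IsBlockDecomp n m k) (R : ℝ) :
    volume (superBall p m k (0 : Fin n → ℝ) R) < ⊤ := by
  have hsub : superBall p m k (0 : Fin n → ℝ) R ⊆ Set.pi Set.univ fun _ => Set.Icc (-R) R := by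
    intro y hy i _
    have h := abs_le_superNorm hp hk (y - 0) i
    simp only [sub_zero] at h
    have hy' : superNorm p m k (y - 0) ≤ R := hy
    rw [sub_zero] at hy'
    rw [Set.mem_Icc, ← abs_le]
    exact le_trans h hy'
  refine lt_of_le_of_lt (measure_mono hsub) ?_
  rw [volume_pi_pi]
  exact ENNReal.prod_lt_top fun i _ => by simp [Real.volume_Icc]

lemma measurableSet_superBall (hp : 1 ≤ p) (c : Fin n → ℝ) (R : ℝ) :
    MeasurableSet (superBall p m k c R) :=
  (((continuous_superNorm hp).comp (continuous_id.sub continuous_const)).measurable)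
    measurableSet_Iic

lemma measurableSet_sepSet (hp : 1 ≤ p) (t : ℕ) (s : ℝ) :
    MeasurableSet {y : Fin t → Fin n → ℝ | ∀ i j : Fin t, i ≠ j →
      s ≤ superNorm p m k (y i - y j)} := by
  have h : {y : Fin t → Fin n → ℝ | ∀ i j : Fin t, i ≠ j → s ≤ superNorm p m k (y i - y j)}
      = ⋂ (i : Fin t) (j : Fin t) (_ : i ≠ j),
          (fun y : Fin t → Fin n → ℝ => superNorm p m k (y i - y j)) ⁻¹' Set.Ici s := by
    ext y; simp [Set.mem_iInter, Set.mem_preimage]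
  rw [h]
  refine MeasurableSet.iInter fun i => MeasurableSet.iInter fun j =>
    MeasurableSet.iInter fun _ => ?_
  exact (((continuous_superNorm hp).comp
    ((continuous_apply i).sub (continuous_apply j))).measurable) measurableSet_Ici

lemma smul_inter_eq (hp : 1 ≤ p) (t : ℕ) {c R s : ℝ} (hc : 0 < c) :
    (Set.univ.pi fun _ : Fin t => superBall p m k (0 : Fin n → ℝ) (c * R)) ∩
      {y : Fin t → Fin n → ℝ | ∀ i j : Fin t, i ≠ j → s ≤ superNorm p m k (y i - y j)}
    = c • ((Set.univ.pi fun _ : Fin t => superBall p m k (0 : Fin n → ℝ) R) ∩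
      {y : Fin t → Fin n → ℝ | ∀ i j : Fin t, i ≠ j → s / c ≤ superNorm p m k (y i - y j)}) := by
  have hinv : (0:ℝ) ≤ c⁻¹ := (inv_pos.2 hc).le
  have hball : ∀ v : Fin n → ℝ, superNorm p m k (c⁻¹ • v) ≤ R ↔ superNorm p m k v ≤ c * R := by
    intro v
    rw [superNorm_smul hp hinv]
    constructor
    · intro h
      have := mul_le_mul_of_nonneg_left h hc.le
      calc superNorm p m k v = c * (c⁻¹ * superNorm p m k v) := by field_simp
        _ ≤ c * R := this
    · intro h
      have := mul_le_mul_of_nonneg_left h hinv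
      calc c⁻¹ * superNorm p m k v ≤ c⁻¹ * (c * R) := this
        _ = R := by field_simp
  have hsep : ∀ v : Fin n → ℝ, s / c ≤ superNorm p m k (c⁻¹ • v) ↔ s ≤ superNorm p m k v := by
    intro v
    rw [superNorm_smul hp hinv, div_le_iff₀ hc, mul_comm (c⁻¹) _, mul_assoc,
      inv_mul_cancel₀ hc.ne', mul_one]
  ext x
  rw [Set.mem_smul_set_iff_inv_smul_mem₀ hc.ne']
  simp only [Set.mem_inter_iff, Set.mem_pi, Set.mem_univ, forall_true_left, Set.mem_setOf_eq]
  constructor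
  · rintro ⟨h1, h2⟩
    refine ⟨fun i => ?_, fun i j hij => ?_⟩
    · show superNorm p m k ((c⁻¹ • x) i - 0) ≤ R
      have h : superNorm p m k (x i - 0) ≤ c * R := h1 i
      rw [sub_zero] at h
      rw [sub_zero, Pi.smul_apply]
      exact (hball (x i)).2 h
    · have := h2 i j hij
      show s / c ≤ superNorm p m k ((c⁻¹ • x) i - (c⁻¹ • x) j)
      rw [show (c⁻¹ • x) i - (c⁻¹ • x) j = c⁻¹ • (x i - x j) by
        simp [Pi.smul_apply, smul_sub]]
      exact (hsep _).2 this
  · rintro ⟨h1, h2⟩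
    refine ⟨fun i => ?_, fun i j hij => ?_⟩
    · show superNorm p m k (x i - 0) ≤ c * R
      rw [sub_zero]
      have h' : superNorm p m k ((c⁻¹ • x) i - 0) ≤ R := h1 i
      rw [sub_zero, Pi.smul_apply] at h'
      exact (hball (x i)).1 h'
    · have h := h2 i j hij
      rw [show (c⁻¹ • x) i - (c⁻¹ • x) j = c⁻¹ • (x i - x j) by
        simp [Pi.smul_apply, smul_sub]] at h
      exact (hsep _).1 h

lemma superBall_smul_eq (hp : 1 ≤ p) {c R : ℝ} (hc : 0 < c) :
    superBall p m k (0 : Fin n → ℝ) (c * R) = c • superBall p m k (0 : Fin n → ℝ) R := by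
  ext y
  rw [Set.mem_smul_set_iff_inv_smul_mem₀ hc.ne']
  show superNorm p m k (y - 0) ≤ c * R ↔ superNorm p m k (c⁻¹ • y - 0) ≤ R
  rw [sub_zero, sub_zero, superNorm_smul hp (inv_pos.2 hc).le]
  constructor
  · intro h
    have := mul_le_mul_of_nonneg_left h (inv_pos.2 hc).le
    calc c⁻¹ * superNorm p m k y ≤ c⁻¹ * (c * R) := this
      _ = R := by field_simp
  · intro h
    have := mul_le_mul_of_nonneg_left h hc.le
    calc superNorm p m k y = c * (c⁻¹ * superNorm p m k y) := by field_simp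
      _ ≤ c * R := this

end AuxLemmas

/-- **Inequality (18): monotonicity of the separation probability in the radius.**
Fix `p ≥ 1`, a block decomposition `k` of `{1, …, n}`, `r > 0` and `t ∈ ℕ`. For radii
`0 < R₂ ≤ R₁`, the probability that `t` independent uniformly random points of the
superball of radius `R` are pairwise `2r`-separated is monotone in `R`. -/
theorem separation_probability_mono (p : ℝ) (hp : 1 ≤ p) (n m : ℕ) (k : ℕ → ℕ)
    (hk : IsBlockDecomp n m k) (r : ℝ) (hr : 0 < r) (t : ℕ)
    (R₁ R₂ : ℝ) (hR₂ : 0 < R₂) (hR : R₂ ≤ R₁) :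
    (((volume (superBall p m k (0 : Fin n → ℝ) R₂)).toReal) ^ t)⁻¹ *
        (∫ x : Fin t → Fin n → ℝ in
            Set.univ.pi fun _ => superBall p m k (0 : Fin n → ℝ) R₂,
          Set.indicator
            {y : Fin t → Fin n → ℝ | ∀ i j : Fin t, i ≠ j →
              2 * r ≤ superNorm p m k (y i - y j)} (fun _ => (1 : ℝ)) x) ≤
      (((volume (superBall p m k (0 : Fin n → ℝ) R₁)).toReal) ^ t)⁻¹ *
        (∫ x : Fin t → Fin n → ℝ in
            Set.univ.pi fun _ => superBall p m k (0 : Fin n → ℝ) R₁,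
          Set.indicator
            {y : Fin t → Fin n → ℝ | ∀ i j : Fin t, i ≠ j →
              2 * r ≤ superNorm p m k (y i - y j)} (fun _ => (1 : ℝ)) x) := by
    classical
  have hR₁ : 0 < R₁ := lt_of_lt_of_le hR₂ hR
  set c : ℝ := R₁ / R₂ with hcdef
  have hc : 0 < c := div_pos hR₁ hR₂
  have hc1 : 1 ≤ c := (one_le_div hR₂).2 hR
  have hcR : c * R₂ = R₁ := div_mul_cancel₀ _ hR₂.ne'
  have hd : Module.finrank ℝ (Fin t → Fin n → ℝ) = t * n := by
    rw [Module.finrank_pi_fintype ℝ]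
    simp [Module.finrank_fin_fun]
  -- rewrite the integrals as measures
  have hint : ∀ R : ℝ,
      (∫ x : Fin t → Fin n → ℝ in Set.univ.pi fun _ => superBall p m k (0 : Fin n → ℝ) R,
        Set.indicator {y : Fin t → Fin n → ℝ | ∀ i j : Fin t, i ≠ j →
          2 * r ≤ superNorm p m k (y i - y j)} (fun _ => (1 : ℝ)) x)
      = (volume ((Set.univ.pi fun _ : Fin t => superBall p m k (0 : Fin n → ℝ) R) ∩
          {y : Fin t → Fin n → ℝ | ∀ i j : Fin t, i ≠ j →
            2 * r ≤ superNorm p m k (y i - y j)})).toReal := by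
    intro R
    rw [setIntegral_indicator (measurableSet_sepSet hp t (2 * r)), setIntegral_const,
      smul_eq_mul, mul_one]
    rfl
  rw [hint R₁, hint R₂]
  -- scaling of the key set
  have hkey := smul_inter_eq (n := n) (m := m) (k := k) hp t hc (R := R₂) (s := 2 * r)
  rw [hcR] at hkey
  -- volume scaling of the ball
  have hv : volume (superBall p m k (0 : Fin n → ℝ) R₁)
      = ENNReal.ofReal (c ^ n) * volume (superBall p m k (0 : Fin n → ℝ) R₂) := by
    have h1 : superBall p m k (0 : Fin n → ℝ) R₁ = c • superBall p m k (0 : Fin n → ℝ) R₂ := by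
      rw [← hcR, superBall_smul_eq hp hc]
    rw [h1, MeasureTheory.Measure.addHaar_smul_of_nonneg volume hc.le, Module.finrank_fin_fun]
  have hW : volume ((Set.univ.pi fun _ : Fin t => superBall p m k (0 : Fin n → ℝ) R₁) ∩
        {y : Fin t → Fin n → ℝ | ∀ i j : Fin t, i ≠ j → 2 * r ≤ superNorm p m k (y i - y j)})
      = ENNReal.ofReal (c ^ (t * n)) *
        volume ((Set.univ.pi fun _ : Fin t => superBall p m k (0 : Fin n → ℝ) R₂) ∩
          {y : Fin t → Fin n → ℝ | ∀ i j : Fin t, i ≠ j →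
            2 * r / c ≤ superNorm p m k (y i - y j)}) := by
    rw [hkey, MeasureTheory.Measure.addHaar_smul_of_nonneg volume hc.le, hd]
  -- monotonicity of the separation sets
  have hsub : {y : Fin t → Fin n → ℝ | ∀ i j : Fin t, i ≠ j →
        2 * r ≤ superNorm p m k (y i - y j)}
      ⊆ {y : Fin t → Fin n → ℝ | ∀ i j : Fin t, i ≠ j →
        2 * r / c ≤ superNorm p m k (y i - y j)} :=
    fun y hy i j hij => le_trans (div_le_self (by positivity) hc1) (hy i j hij)
  have hpifin : volume (Set.univ.pi fun _ : Fin t => superBall p m k (0 : Fin n → ℝ) R₂) ≠ ⊤ := by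
    rw [volume_pi_pi]
    exact (ENNReal.prod_lt_top fun i _ => volume_superBall_lt_top hp hk R₂).ne
  have hfin : volume ((Set.univ.pi fun _ : Fin t => superBall p m k (0 : Fin n → ℝ) R₂) ∩
      {y : Fin t → Fin n → ℝ | ∀ i j : Fin t, i ≠ j →
        2 * r / c ≤ superNorm p m k (y i - y j)}) ≠ ⊤ :=
    fun h => hpifin (top_le_iff.1 (h ▸ measure_mono Set.inter_subset_left))
  have hmono : (volume ((Set.univ.pi fun _ : Fin t => superBall p m k (0 : Fin n → ℝ) R₂) ∩
        {y : Fin t → Fin n → ℝ | ∀ i j : Fin t, i ≠ j →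
          2 * r ≤ superNorm p m k (y i - y j)})).toReal
      ≤ (volume ((Set.univ.pi fun _ : Fin t => superBall p m k (0 : Fin n → ℝ) R₂) ∩
        {y : Fin t → Fin n → ℝ | ∀ i j : Fin t, i ≠ j →
          2 * r / c ≤ superNorm p m k (y i - y j)})).toReal :=
    ENNReal.toReal_mono hfin (measure_mono (Set.inter_subset_inter_right _ hsub))
  set a : ℝ := (volume (superBall p m k (0 : Fin n → ℝ) R₂)).toReal with hadef
  set w' : ℝ := (volume ((Set.univ.pi fun _ : Fin t => superBall p m k (0 : Fin n → ℝ) R₂) ∩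
    {y : Fin t → Fin n → ℝ | ∀ i j : Fin t, i ≠ j →
      2 * r / c ≤ superNorm p m k (y i - y j)})).toReal with hw'def
  have hv' : (volume (superBall p m k (0 : Fin n → ℝ) R₁)).toReal = c ^ n * a := by
    rw [hv, ENNReal.toReal_mul, ENNReal.toReal_ofReal (by positivity)]
  have hW' : (volume ((Set.univ.pi fun _ : Fin t => superBall p m k (0 : Fin n → ℝ) R₁) ∩
        {y : Fin t → Fin n → ℝ | ∀ i j : Fin t, i ≠ j →
          2 * r ≤ superNorm p m k (y i - y j)})).toReal = c ^ (t * n) * w' := by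
    rw [hW, ENNReal.toReal_mul, ENNReal.toReal_ofReal (by positivity)]
  rw [hv', hW']
  have hcnt : ((c ^ n) ^ t : ℝ) = c ^ (t * n) := by rw [← pow_mul, mul_comm]
  have hne : (c : ℝ) ^ (t * n) ≠ 0 := by positivity
  have heq : ((c ^ n * a) ^ t)⁻¹ * (c ^ (t * n) * w') = (a ^ t)⁻¹ * w' := by
    rw [mul_pow, hcnt, mul_inv]
    calc (c ^ (t * n))⁻¹ * (a ^ t)⁻¹ * (c ^ (t * n) * w')
        = ((c ^ (t * n))⁻¹ * c ^ (t * n)) * ((a ^ t)⁻¹ * w') := by ring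
      _ = (a ^ t)⁻¹ * w' := by rw [inv_mul_cancel₀ hne, one_mul]
  rw [heq]
  exact mul_le_mul_of_nonneg_left hmono (by positivity)
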